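/- arXiv:1609.03758 — 3 statements merged into one kernel-verified Lean document; each statement's English description precedes it below -/
import Mathlib

section
/- Let the D×D matrices F (quantum Fisher information) and G (weight matrix) be defined blockwise as follows, for a rank-r state ρ = Diag(λ₁,…,λ_r,0,…,0) with r > 1 and λ_i > 0: the diagonal–diagonal block has F^{dd}_{aa} = 1/λ_{r_a} + 1/λ_1 and F^{dd}_{ab} = 1/λ_1 for a ≠ b (indices with rows 2 ≤ r_a ≤ r); the real–real and imaginary–imaginary blocks are diagonal with F^{rr/ii}_{aa} = 4/(λ_{r_a} + λ_{c_a}) when the column index satisfies r_a < c_a ≤ r, and F^{rr/ii}_{aa} = 4/λ_{r_a} when c_a > r; all other blocks are zero. Likewise G^{dd}_{ab} = 1 + δ_{ab}, G^{rr} = G^{ii} = 2·Id, other blocks zero. Then F ≤ (2/λ_min(ρ))·G in the Loewner order, where λ_min(ρ) := min_{1 ≤ i ≤ r} λ_i; equivalently, the largest eigenvalue of G^{-1/2} F G^{-1/2} is at most 2/λ_min(ρ). -/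
open Matrix
noncomputable section

/-- Indices of the diagonal parameters `ρ_{22}, …, ρ_{rr}` (0-indexed rows `1,…,r−1`). -/
abbrev DiagIdx (d r : ℕ) := {j : Fin d // 0 < (j : ℕ) ∧ (j : ℕ) < r}

/-- Indices of the off-diagonal parameters `ρ_{jk}`, `1 ≤ j ≤ r`, `j < k ≤ d`
(0-indexed: `j < r`, `j < k`). -/
abbrev OffIdx (d r : ℕ) := {p : Fin d × Fin d // (p.1 : ℕ) < r ∧ p.1 < p.2}

/-- The index set of the `D = 2rd − r² − 1` local parameters of rank-r states. -/
abbrev ParamIdx (d r : ℕ) := (DiagIdx d r ⊕ OffIdx d r) ⊕ OffIdx d r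

/-- Extension of the eigenvalue list to all of `Fin d` (zero beyond position `r`). -/
def lamOf {d r : ℕ} (lam : Fin r → ℝ) (j : Fin d) : ℝ :=
  if h : (j : ℕ) < r then lam ⟨j, h⟩ else 0

/-- The quantum Fisher information matrix `F` at `ρ = Diag(λ₁,…,λ_r,0,…,0)`, defined
blockwise: `F^{dd}_{aa} = 1/λ_{r_a} + 1/λ₁`, `F^{dd}_{ab} = 1/λ₁` (`a ≠ b`);
`F^{rr/ii}` diagonal with `F_{aa} = 4/(λ_{r_a} + λ_{c_a})` if `c_a ≤ r` and `4/λ_{r_a}`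
if `c_a > r`; all other blocks zero. -/
def Fquantum (d r : ℕ) (hr : 0 < r) (lam : Fin r → ℝ) :
    Matrix (ParamIdx d r) (ParamIdx d r) ℝ :=
  Matrix.of fun a b =>
    match a, b with
    | Sum.inl (Sum.inl j), Sum.inl (Sum.inl j') =>
        if j = j' then 1 / lamOf lam j.1 + 1 / lam ⟨0, hr⟩ else 1 / lam ⟨0, hr⟩
    | Sum.inl (Sum.inr p), Sum.inl (Sum.inr p') =>
        if p = p' then
          (if (p.1.2 : ℕ) < r then 4 / (lamOf lam p.1.1 + lamOf lam p.1.2)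
           else 4 / lamOf lam p.1.1)
        else 0
    | Sum.inr p, Sum.inr p' =>
        if p = p' then
          (if (p.1.2 : ℕ) < r then 4 / (lamOf lam p.1.1 + lamOf lam p.1.2)
           else 4 / lamOf lam p.1.1)
        else 0
    | _, _ => 0

/-- The weight matrix `G`, defined blockwise: `G^{dd}_{ab} = 1 + δ_{ab}`,
`G^{rr} = G^{ii} = 2·Id`, all other blocks zero. -/
def Gweight (d r : ℕ) : Matrix (ParamIdx d r) (ParamIdx d r) ℝ :=
  Matrix.of fun a b =>
    match a, b with
    | Sum.inl (Sum.inl j), Sum.inl (Sum.inl j') => if j = j' then 2 else 1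
    | Sum.inl (Sum.inr p), Sum.inl (Sum.inr p') => if p = p' then 2 else 0
    | Sum.inr p, Sum.inr p' => if p = p' then 2 else 0
    | _, _ => 0


/-- Auxiliary: indicator of the diagonal-parameter block. -/
def vAux (d r : ℕ) : ParamIdx d r → ℝ := fun a =>
  match a with
  | Sum.inl (Sum.inl _) => 1
  | _ => 0

/-- Auxiliary: the off-diagonal Fisher entry. -/
def fAux {d r : ℕ} (lam : Fin r → ℝ) (p : OffIdx d r) : ℝ :=
  if (p.1.2 : ℕ) < r then 4 / (lamOf lam p.1.1 + lamOf lam p.1.2)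
  else 4 / lamOf lam p.1.1

/-- Auxiliary: the diagonal remainder. -/
def eAux {d r : ℕ} (lam : Fin r → ℝ) (lmin : ℝ) : ParamIdx d r → ℝ := fun a =>
  match a with
  | Sum.inl (Sum.inl j) => 2 / lmin - 1 / lamOf lam j.1
  | Sum.inl (Sum.inr p) => 2 / lmin * 2 - fAux lam p
  | Sum.inr p => 2 / lmin * 2 - fAux lam p

/-- the quantum Fisher information `F` satisfies `F ≤ (2/λ_min(ρ))·G` in the
Loewner order (equivalently, `λ_max(G^{-1/2} F G^{-1/2}) ≤ 2/λ_min(ρ)`). -/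
theorem quantum_fisher_le_weight (d r : ℕ) (hd : 2 ≤ d) (hr1 : 1 < r) (hr : 0 < r)
    (hrd : r ≤ d) (lam : Fin r → ℝ) (hpos : ∀ i, 0 < lam i) (hsum : ∑ i, lam i = 1)
    (lmin : ℝ) (hlb : ∀ i, lmin ≤ lam i) (hmem : ∃ i, lam i = lmin) :
    ((2 / lmin) • Gweight d r - Fquantum d r hr lam).PosSemidef := by
  obtain ⟨i0, hi0⟩ := hmem
  have hlmin : 0 < lmin := hi0 ▸ hpos i0
  have h2inv : ∀ i : Fin r, 1 / lam i ≤ 2 / lmin := by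
    intro i
    calc 1 / lam i ≤ 1 / lmin := one_div_le_one_div_of_le hlmin (hlb i)
      _ ≤ 2 / lmin := by gcongr; norm_num
  set c : ℝ := 2 / lmin - 1 / lam ⟨0, hr⟩ with hcdef
  have hc0 : 0 ≤ c := sub_nonneg.2 (h2inv _)
  -- nonnegativity of the diagonal remainder
  have he : ∀ a : ParamIdx d r, 0 ≤ eAux lam lmin a := by
    have hoff : ∀ p : OffIdx d r, fAux lam p ≤ 2 / lmin * 2 := by
      intro p
      have h1 : (p.1.1 : ℕ) < r := p.2.1
      have hl1 : lamOf lam p.1.1 = lam ⟨p.1.1, h1⟩ := by simp [lamOf, h1]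
      have hp1 : 0 < lamOf lam p.1.1 := hl1 ▸ hpos _
      have hm1 : lmin ≤ lamOf lam p.1.1 := hl1 ▸ hlb _
      unfold fAux
      split_ifs with h2
      · have hl2 : lamOf lam p.1.2 = lam ⟨p.1.2, h2⟩ := by simp [lamOf, h2]
        have hp2 : 0 < lamOf lam p.1.2 := hl2 ▸ hpos _
        have : lmin ≤ lamOf lam p.1.1 + lamOf lam p.1.2 := le_add_of_le_of_nonneg hm1 hp2.le
        calc 4 / (lamOf lam p.1.1 + lamOf lam p.1.2) ≤ 4 / lmin := by
              apply div_le_div_of_nonneg_left (by norm_num) hlmin this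
          _ = 2 / lmin * 2 := by ring
      · calc 4 / lamOf lam p.1.1 ≤ 4 / lmin := by
              apply div_le_div_of_nonneg_left (by norm_num) hlmin hm1
          _ = 2 / lmin * 2 := by ring
    rintro ((j | p) | p)
    · have hj : (j.1 : ℕ) < r := j.2.2
      have : lamOf lam j.1 = lam ⟨j.1, hj⟩ := by simp [lamOf, hj]
      have := h2inv ⟨j.1, hj⟩
      simp only [eAux]
      rw [‹lamOf lam j.1 = _›]
      linarith
    · simpa only [eAux, sub_nonneg] using hoff p
    · simpa only [eAux, sub_nonneg] using hoff p
  -- the decomposition `M = c • v vᵀ + diag(e)` with `c ≥ 0`, `e ≥ 0`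
  have hM : (2 / lmin) • Gweight d r - Fquantum d r hr lam
      = c • Matrix.vecMulVec (vAux d r) (vAux d r) + Matrix.diagonal (eAux lam lmin) := by
    ext a b
    simp only [Matrix.sub_apply, Matrix.smul_apply, Matrix.add_apply, Matrix.vecMulVec_apply,
      smul_eq_mul, Matrix.diagonal_apply]
    rcases a with (j | p) | p <;> rcases b with (j' | p') | p' <;>
      simp only [Fquantum, Gweight, Matrix.of_apply, vAux, eAux, fAux, Sum.inl.injEq,
        Sum.inr.injEq, reduceCtorEq, if_false, mul_zero, zero_mul, mul_one, sub_zero,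
        add_zero, zero_add, mul_comm] <;>
      split_ifs <;> ring
  rw [hM]
  apply Matrix.PosSemidef.add
  · refine Matrix.PosSemidef.of_dotProduct_mulVec_nonneg ?_ ?_
    · ext a b
      simp [Matrix.conjTranspose_apply, Matrix.vecMulVec_apply, mul_comm]
    · intro x
      have key : star x ⬝ᵥ (c • Matrix.vecMulVec (vAux d r) (vAux d r)) *ᵥ x
          = c * ((∑ a, vAux d r a * x a) * (∑ b, vAux d r b * x b)) := by
        simp only [dotProduct, Matrix.mulVec, Matrix.smul_apply,
          Matrix.vecMulVec_apply, smul_eq_mul, star_trivial, Finset.mul_sum,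
          Finset.sum_mul]
        apply Finset.sum_congr rfl; intro a _
        apply Finset.sum_congr rfl; intro b _
        ring
      rw [key]
      exact mul_nonneg hc0 (mul_self_nonneg _)
  · exact Matrix.PosSemidef.diagonal he

end
end

section
/- In the single-qubit model with 0 < λ₂ < 1/2, the mean over uniformly random measurement settings of the diagonal–diagonal Fisher element satisfies Ī^{dd}(λ₂) := (1/4π) ∫₀^{2π} ∫₀^π [4cos²θ / (1 − (1−2λ₂)²·cos²θ)]·sin θ dθ dφ = (2·ln(2(1−λ₂)) − 2·ln(2λ₂))/(1−2λ₂)³ − 4/(1−2λ₂)². -/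
open Real intervalIntegral

lemma fisher_hasDerivAt (a : ℝ) (ha : 0 < a) (ha1 : a < 1) (θ : ℝ) :
    HasDerivAt (fun x : ℝ =>
        (2 / a ^ 3) * (Real.log (1 - a * Real.cos x) - Real.log (1 + a * Real.cos x))
          + 4 * Real.cos x / a ^ 2)
      ((4 * Real.cos θ ^ 2 / (1 - a ^ 2 * Real.cos θ ^ 2)) * Real.sin θ) θ := by
  have hcb : |Real.cos θ| ≤ 1 := Real.abs_cos_le_one θ
  have habs : |a * Real.cos θ| < 1 := by
    rw [abs_mul, abs_of_pos ha]
    calc a * |Real.cos θ| ≤ a * 1 := by nlinarith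
    _ < 1 := by linarith
  have h1pos : 0 < 1 - a * Real.cos θ := by
    have := abs_lt.mp habs; linarith [this.2]
  have h2pos : 0 < 1 + a * Real.cos θ := by
    have := abs_lt.mp habs; linarith [this.1]
  have hca : HasDerivAt (fun x : ℝ => a * Real.cos x) (a * -Real.sin θ) θ :=
    (Real.hasDerivAt_cos θ).const_mul a
  have h1 : HasDerivAt (fun x : ℝ => 1 - a * Real.cos x) (0 - a * -Real.sin θ) θ :=
    (hasDerivAt_const θ (1 : ℝ)).sub hca
  have h2 : HasDerivAt (fun x : ℝ => 1 + a * Real.cos x) (0 + a * -Real.sin θ) θ :=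
    (hasDerivAt_const θ (1 : ℝ)).add hca
  have hl1 := h1.log h1pos.ne'
  have hl2 := h2.log h2pos.ne'
  have hc2 : HasDerivAt (fun x : ℝ => 4 * Real.cos x / a ^ 2)
      (4 * -Real.sin θ / a ^ 2) θ := ((Real.hasDerivAt_cos θ).const_mul 4).div_const _
  have H := ((hl1.sub hl2).const_mul (2 / a ^ 3)).add hc2
  refine H.congr_deriv ?_
  have ha' : a ≠ 0 := ha.ne'
  have hden : 1 - a ^ 2 * Real.cos θ ^ 2 ≠ 0 := by
    have : (1 - a * Real.cos θ) * (1 + a * Real.cos θ) = 1 - a ^ 2 * Real.cos θ ^ 2 := by ring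
    rw [← this]
    exact mul_ne_zero h1pos.ne' h2pos.ne'
  field_simp
  ring

/-- the mean over uniformly random settings of the diagonal–diagonal Fisher
element: `(1/4π)·∫₀^{2π}∫₀^π [4cos²θ/(1−(1−2λ₂)²cos²θ)]·sinθ dθ dφ
  = (2 ln(2(1−λ₂)) − 2 ln(2λ₂))/(1−2λ₂)³ − 4/(1−2λ₂)²`. -/
theorem mean_fisher_dd (l : ℝ) (hl : 0 < l) (hl2 : l < 1 / 2) :
    (1 / (4 * Real.pi)) *
        ∫ φ in (0 : ℝ)..(2 * Real.pi), ∫ θ in (0 : ℝ)..Real.pi,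
          (4 * Real.cos θ ^ 2 / (1 - (1 - 2 * l) ^ 2 * Real.cos θ ^ 2)) * Real.sin θ
      = (2 * Real.log (2 * (1 - l)) - 2 * Real.log (2 * l)) / (1 - 2 * l) ^ 3
          - 4 / (1 - 2 * l) ^ 2 := by
  set a : ℝ := 1 - 2 * l with ha_def
  have ha : 0 < a := by simp [ha_def]; linarith
  have ha1 : a < 1 := by simp [ha_def]; linarith
  have ha' : a ≠ 0 := ha.ne'
  -- denominator never vanishes
  have hden : ∀ θ : ℝ, 1 - a ^ 2 * Real.cos θ ^ 2 ≠ 0 := by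
    intro θ
    have hcb : Real.cos θ ^ 2 ≤ 1 := by
      have := Real.abs_cos_le_one θ
      nlinarith [abs_nonneg (Real.cos θ), sq_abs (Real.cos θ)]
    nlinarith
  -- integrability of the inner integrand
  have hcont : Continuous fun θ : ℝ =>
      (4 * Real.cos θ ^ 2 / (1 - a ^ 2 * Real.cos θ ^ 2)) * Real.sin θ := by
    apply Continuous.mul _ Real.continuous_sin
    exact (continuous_const.mul (Real.continuous_cos.pow 2)).div
      (continuous_const.sub (continuous_const.mul (Real.continuous_cos.pow 2))) hden
  have hinner : (∫ θ in (0 : ℝ)..Real.pi,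
      (4 * Real.cos θ ^ 2 / (1 - a ^ 2 * Real.cos θ ^ 2)) * Real.sin θ)
      = (4 / a ^ 3) * (Real.log (1 + a) - Real.log (1 - a)) - 8 / a ^ 2 := by
    rw [intervalIntegral.integral_eq_sub_of_hasDerivAt
      (fun θ _ => fisher_hasDerivAt a ha ha1 θ) (hcont.intervalIntegrable _ _)]
    simp only [Real.cos_pi, Real.cos_zero]
    ring_nf
  rw [show (fun φ : ℝ => ∫ θ in (0 : ℝ)..Real.pi,
        (4 * Real.cos θ ^ 2 / (1 - a ^ 2 * Real.cos θ ^ 2)) * Real.sin θ)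
      = fun _ : ℝ => (4 / a ^ 3) * (Real.log (1 + a) - Real.log (1 - a)) - 8 / a ^ 2
    from funext fun _ => hinner] at *
  rw [intervalIntegral.integral_const, smul_eq_mul]
  have e1 : (2:ℝ) * (1 - l) = 1 + a := by rw [ha_def]; ring
  have e2 : (2:ℝ) * l = 1 - a := by rw [ha_def]; ring
  rw [e1, e2]
  have hpi : Real.pi ≠ 0 := Real.pi_ne_zero
  field_simp
  ring
end

section
/- In the single-qubit model with 0 < λ₂ < 1/2, the mean over uniformly random measurement settings of the real–real Fisher element satisfies Ī^{rr}(λ₂) := (1/4π) ∫₀^{2π} ∫₀^π [4cos²φ·sin²θ / (1 − (1−2λ₂)²·cos²θ)]·sin θ dθ dφ = (ln(2(1−λ₂)) − ln(2λ₂))/(1−2λ₂) − Ī^{dd}(λ₂)/2, where Ī^{dd}(λ₂) = (2·ln(2(1−λ₂)) − 2·ln(2λ₂))/(1−2λ₂)³ − 4/(1−2λ₂)²; the same value is obtained for the imaginary–imaginary element Ī^{ii}(λ₂), in which cos²φ is replaced by sin²φ. -/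
open Real intervalIntegral

lemma inner_theta_int (a : ℝ) (ha : 0 < a) (ha1 : a < 1) :
    ∫ θ in (0:ℝ)..Real.pi, Real.sin θ ^ 2 / (1 - a ^ 2 * Real.cos θ ^ 2) * Real.sin θ
      = 2 / a ^ 2 - (1 - a ^ 2) / a ^ 3 * (Real.log (1 + a) - Real.log (1 - a)) := by
  have hden : ∀ x : ℝ, 0 < 1 - a ^ 2 * Real.cos x ^ 2 := by
    intro x
    nlinarith [Real.cos_sq_le_one x, sq_nonneg (Real.cos x), sq_nonneg a]
  have h1 : ∀ x : ℝ, 0 < 1 + a * Real.cos x := by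
    intro x; nlinarith [Real.neg_one_le_cos x, Real.cos_le_one x]
  have h2 : ∀ x : ℝ, 0 < 1 - a * Real.cos x := by
    intro x; nlinarith [Real.neg_one_le_cos x, Real.cos_le_one x]
  have ha0 : a ≠ 0 := ne_of_gt ha
  set F : ℝ → ℝ := fun θ =>
    -Real.cos θ / a ^ 2 + (1 - a ^ 2) / (2 * a ^ 3) *
      (Real.log (1 + a * Real.cos θ) - Real.log (1 - a * Real.cos θ)) with hF
  have hderiv : ∀ x ∈ Set.uIcc (0:ℝ) Real.pi,
      HasDerivAt F (Real.sin x ^ 2 / (1 - a ^ 2 * Real.cos x ^ 2) * Real.sin x) x := by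
    intro x _
    have hc := Real.hasDerivAt_cos x
    have hA : HasDerivAt (fun θ => 1 + a * Real.cos θ) (a * (-Real.sin x)) x :=
      (hc.const_mul a).const_add 1
    have hB : HasDerivAt (fun θ => 1 - a * Real.cos θ) (-(a * (-Real.sin x))) x :=
      (hc.const_mul a).const_sub 1
    have hlogA := hA.log (ne_of_gt (h1 x))
    have hlogB := hB.log (ne_of_gt (h2 x))
    have h := ((hc.neg.div_const (a ^ 2)).add
      ((hlogA.sub hlogB).const_mul ((1 - a ^ 2) / (2 * a ^ 3))))
    refine h.congr_deriv ?_
    rw [Real.sin_sq x]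
    field_simp [ne_of_gt (hden x), ne_of_gt (h1 x), ne_of_gt (h2 x)]
    ring
  have hcont : Continuous fun x : ℝ =>
      Real.sin x ^ 2 / (1 - a ^ 2 * Real.cos x ^ 2) * Real.sin x := by
    exact ((Real.continuous_sin.pow 2).div
      (by continuity) (fun x => ne_of_gt (hden x))).mul Real.continuous_sin
  rw [intervalIntegral.integral_eq_sub_of_hasDerivAt hderiv (hcont.intervalIntegrable _ _)]
  simp only [hF, Real.cos_pi, Real.cos_zero]
  have e1 : a * -1 = -a := by ring
  rw [e1, mul_one]
  rw [show (1:ℝ) + -a = 1 - a by ring, show (1:ℝ) - -a = 1 + a by ring]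
  field_simp
  ring

/-- the means over uniformly random settings of the real–real and
imaginary–imaginary Fisher elements:
`Ī^{rr}(λ₂) = Ī^{ii}(λ₂) = (ln(2(1−λ₂)) − ln(2λ₂))/(1−2λ₂) − Ī^{dd}(λ₂)/2`, where
`Ī^{dd}(λ₂) = (2 ln(2(1−λ₂)) − 2 ln(2λ₂))/(1−2λ₂)³ − 4/(1−2λ₂)²`. -/
theorem mean_fisher_rr_ii (l : ℝ) (hl : 0 < l) (hl2 : l < 1 / 2) :
    ((1 / (4 * Real.pi)) *
        ∫ φ in (0 : ℝ)..(2 * Real.pi), ∫ θ in (0 : ℝ)..Real.pi,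
          (4 * Real.cos φ ^ 2 * Real.sin θ ^ 2 / (1 - (1 - 2 * l) ^ 2 * Real.cos θ ^ 2)) *
            Real.sin θ
      = (Real.log (2 * (1 - l)) - Real.log (2 * l)) / (1 - 2 * l)
          - ((2 * Real.log (2 * (1 - l)) - 2 * Real.log (2 * l)) / (1 - 2 * l) ^ 3
              - 4 / (1 - 2 * l) ^ 2) / 2) ∧
    ((1 / (4 * Real.pi)) *
        ∫ φ in (0 : ℝ)..(2 * Real.pi), ∫ θ in (0 : ℝ)..Real.pi,
          (4 * Real.sin φ ^ 2 * Real.sin θ ^ 2 / (1 - (1 - 2 * l) ^ 2 * Real.cos θ ^ 2)) *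
            Real.sin θ
      = (Real.log (2 * (1 - l)) - Real.log (2 * l)) / (1 - 2 * l)
          - ((2 * Real.log (2 * (1 - l)) - 2 * Real.log (2 * l)) / (1 - 2 * l) ^ 3
              - 4 / (1 - 2 * l) ^ 2) / 2) := by
  set a : ℝ := 1 - 2 * l with haDef
  have ha : 0 < a := by simp only [haDef]; linarith
  have ha1 : a < 1 := by simp only [haDef]; linarith
  have ha0 : a ≠ 0 := ne_of_gt ha
  set J : ℝ := 2 / a ^ 2 - (1 - a ^ 2) / a ^ 3 * (Real.log (1 + a) - Real.log (1 - a))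
    with hJ
  have hlog1 : Real.log (2 * (1 - l)) = Real.log (1 + a) := by
    rw [show 2 * (1 - l) = 1 + a by rw [haDef]; ring]
  have hlog2 : Real.log (2 * l) = Real.log (1 - a) := by
    rw [show 2 * l = 1 - a by rw [haDef]; ring]
  have hRHS : (Real.log (2 * (1 - l)) - Real.log (2 * l)) / a
          - ((2 * Real.log (2 * (1 - l)) - 2 * Real.log (2 * l)) / a ^ 3
              - 4 / a ^ 2) / 2 = J := by
    rw [hlog1, hlog2, hJ]
    field_simp
    ring
  have hinner : ∀ c : ℝ,
      (∫ θ in (0:ℝ)..Real.pi,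
        (4 * c * Real.sin θ ^ 2 / (1 - a ^ 2 * Real.cos θ ^ 2)) * Real.sin θ)
        = (4 * c) * J := by
    intro c
    have : (fun θ => (4 * c * Real.sin θ ^ 2 / (1 - a ^ 2 * Real.cos θ ^ 2)) * Real.sin θ)
        = fun θ => (4 * c) *
            (Real.sin θ ^ 2 / (1 - a ^ 2 * Real.cos θ ^ 2) * Real.sin θ) := by
      funext θ; ring
    rw [this, intervalIntegral.integral_const_mul, inner_theta_int a ha ha1, hJ]
  constructor
  · rw [intervalIntegral.integral_congr
      (g := fun φ => (4 * J) * Real.cos φ ^ 2)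
      (fun φ _ => by rw [hinner (Real.cos φ ^ 2)]; ring)]
    rw [intervalIntegral.integral_const_mul, integral_cos_sq]
    rw [← hRHS]
    have : Real.sin (2 * Real.pi) = 0 := by simp [Real.sin_two_pi]
    rw [this, Real.sin_zero]
    field_simp [Real.pi_ne_zero]
    ring
  · rw [intervalIntegral.integral_congr
      (g := fun φ => (4 * J) * Real.sin φ ^ 2)
      (fun φ _ => by rw [hinner (Real.sin φ ^ 2)]; ring)]
    rw [intervalIntegral.integral_const_mul, integral_sin_sq]
    rw [← hRHS]
    have : Real.sin (2 * Real.pi) = 0 := by simp [Real.sin_two_pi]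
    rw [this, Real.sin_zero]
    field_simp [Real.pi_ne_zero]
    ring
end
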